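/- (Yoneda lemma for two-sided discrete fibrations in CAT.) Let f : A ⥤ B be a functor, let (d₁, E₁, c₁) be any span from X to A, and let (d₂, E₂, c₂) be a two-sided discrete fibration from X to B. Let f/B denote the comma category Comma f (𝟭 B) with projections p to A and q to B, and let K denote the composite span (f/B) ∘ E₁ from X to B: its head is the category with objects pairs (e, w) where e is an object of E₁ and w is an object of f/B with p.obj w = c₁.obj e (morphisms defined componentwise with the matching condition), left leg d₁ ∘ pr₁ and right leg q ∘ pr₂. The span f ∘ E₁ (composite of E₁ with the span (𝟭_A, A, f)) is isomorphic to the span with head E₁, legs d₁ and f ∘ c₁, and the canonical span morphism j : f ∘ E₁ → K sends e to (e, (c₁.obj e, f.obj (c₁.obj e), identity)). Then composition with j is a bijection from the set of span morphisms K → E₂ to the set of span morphisms f ∘ E₁ → E₂. -/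

import Mathlib

open CategoryTheory

universe w v v₁ v₂ v₃ v₄ v₅ u u₁ u₂ u₃ u₄ u₅

/-- A morphism is "an identity" when it is an `eqToHom` of an equality of objects. -/
def IsIdentityHom {C : Type u₁} [Category.{v₁} C] {x y : C} (φ : x ⟶ y) : Prop :=
  ∃ h : x = y, φ = eqToHom h

section StrictPullback

variable {X : Type u₁} {A : Type u₂} {B : Type u₃}
variable [Category.{v₁} X] [Category.{v₂} A] [Category.{v₃} B]

/-- The strict pullback of `g : X ⥤ B` and `f : A ⥤ B`: objects are pairs with equal images. -/
structure StrictPullback (g : X ⥤ B) (f : A ⥤ B) : Type max u₁ u₂ where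
  fst : X
  snd : A
  eq : g.obj fst = f.obj snd

namespace StrictPullback

variable {g : X ⥤ B} {f : A ⥤ B}

/-- Morphisms in the strict pullback: pairs of morphisms with equal images,
modulo the object equalities. -/
@[ext]
structure Hom (P Q : StrictPullback g f) where
  left : P.fst ⟶ Q.fst
  right : P.snd ⟶ Q.snd
  w : g.map left ≫ eqToHom Q.eq = eqToHom P.eq ≫ f.map right

instance : Category (StrictPullback g f) where
  Hom P Q := Hom P Q
  id P := { left := 𝟙 _, right := 𝟙 _, w := by simp }
  comp u v :=
    { left := u.left ≫ v.left
      right := u.right ≫ v.right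
      w := by
        rw [Functor.map_comp, Functor.map_comp, Category.assoc, v.w, ← Category.assoc, u.w,
          Category.assoc] }

end StrictPullback

/-- The projection from a strict pullback to the domain of `g`. -/
def strictPullbackFst (g : X ⥤ B) (f : A ⥤ B) : StrictPullback g f ⥤ X where
  obj P := P.fst
  map u := u.left

/-- The projection from a strict pullback to the domain of `f`. -/
def strictPullbackSnd (g : X ⥤ B) (f : A ⥤ B) : StrictPullback g f ⥤ A where
  obj P := P.snd
  map u := u.right

end StrictPullback

/-- A span of functors `A ⟵d E ⟶c B` is a two-sided discrete fibration from `A` to `B`: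
(i) every `φ : a ⟶ d.obj e` has a unique lift with codomain `e` which is sent by `c` to an
identity; (ii) every `ψ : c.obj e ⟶ b` has a unique lift with domain `e` which is sent by
`d` to an identity; (iii) every morphism of `E` factors as a morphism sent by `d` to an
identity followed by a morphism sent by `c` to an identity (whence, by (i) and (ii), it is
the lift of its `c`-image followed by the lift of its `d`-image). -/
structure IsTwoSidedDiscreteFibration {A : Type u₁} {E : Type u₂} {B : Type u₃}
    [Category.{v₁} A] [Category.{v₂} E] [Category.{v₃} B]
    (d : E ⥤ A) (c : E ⥤ B) : Prop where
  lift_left : ∀ (e : E) (a : A) (φ : a ⟶ d.obj e),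
    ∃! p : Σ e' : E, e' ⟶ e,
      (∃ h : a = d.obj p.1, φ = eqToHom h ≫ d.map p.2) ∧ IsIdentityHom (c.map p.2)
  lift_right : ∀ (e : E) (b : B) (ψ : c.obj e ⟶ b),
    ∃! p : Σ e' : E, e ⟶ e',
      (∃ h : c.obj p.1 = b, ψ = c.map p.2 ≫ eqToHom h) ∧ IsIdentityHom (d.map p.2)
  factor : ∀ {e₁ e₂ : E} (φ : e₁ ⟶ e₂),
    ∃ (e₃ : E) (u : e₁ ⟶ e₃) (v : e₃ ⟶ e₂),
      φ = u ≫ v ∧ IsIdentityHom (d.map u) ∧ IsIdentityHom (c.map v)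

section Statement6

variable {A : Type u₁} {B : Type u₂} {X : Type u₃} {E₁ : Type u₄} {E₂ : Type u₅}
variable [Category.{v₁} A] [Category.{v₂} B] [Category.{v₃} X]
variable [Category.{v₄} E₁] [Category.{v₅} E₂]
variable (f : A ⥤ B) (d₁ : E₁ ⥤ X) (c₁ : E₁ ⥤ A)

/-- The head of the composite span `(f/B) ∘ E₁`: pairs `(e, w)` with `e` in `E₁` and `w` in
`f/B = Comma f (𝟭 B)` such that the projection of `w` to `A` agrees with `c₁.obj e`. -/
abbrev SpanComp := StrictPullback c₁ (Comma.fst f (𝟭 B))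

/-- The left leg of the composite span `(f/B) ∘ E₁`. -/
def spanCompLeft : SpanComp f c₁ ⥤ X :=
  strictPullbackFst c₁ (Comma.fst f (𝟭 B)) ⋙ d₁

/-- The right leg of the composite span `(f/B) ∘ E₁`. -/
def spanCompRight : SpanComp f c₁ ⥤ B :=
  strictPullbackSnd c₁ (Comma.fst f (𝟭 B)) ⋙ Comma.snd f (𝟭 B)

/-- The canonical span morphism `j : f ∘ E₁ ⟶ (f/B) ∘ E₁`, where `f ∘ E₁` is identified
with the span with head `E₁` and legs `d₁` and `c₁ ⋙ f`:  it sends `e` to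
`(e, (c₁.obj e, f.obj (c₁.obj e), identity))`. -/
def jSpan : E₁ ⥤ SpanComp f c₁ where
  obj e :=
    { fst := e
      snd := { left := c₁.obj e, right := f.obj (c₁.obj e), hom := 𝟙 _ }
      eq := rfl }
  map ε :=
    { left := ε
      right := { left := c₁.map ε, right := f.map (c₁.map ε), w := by simp }
      w := by simp }

section Stmt6Aux

lemma IsIdentityHom.comp {C : Type u₁} [Category.{v₁} C] {x y z : C} {φ : x ⟶ y} {ψ : y ⟶ z}
    (h1 : IsIdentityHom φ) (h2 : IsIdentityHom ψ) : IsIdentityHom (φ ≫ ψ) := by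
  obtain ⟨h, rfl⟩ := h1; obtain ⟨h', rfl⟩ := h2; exact ⟨h.trans h', by simp⟩

lemma isIdentityHom_eqToHom {C : Type u₁} [Category.{v₁} C] {x y : C} (h : x = y) :
    IsIdentityHom (eqToHom h) := ⟨h, rfl⟩

lemma IsIdentityHom.obj_eq {C : Type u₁} [Category.{v₁} C] {x y : C} {φ : x ⟶ y}
    (h : IsIdentityHom φ) : x = y := h.choose

lemma IsIdentityHom.eq {C : Type u₁} [Category.{v₁} C] {x y : C} {φ : x ⟶ y}
    (h : IsIdentityHom φ) : φ = eqToHom h.obj_eq := h.choose_spec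

/-- In a two-sided discrete fibration, parallel morphisms with the same images are equal. -/
lemma IsTwoSidedDiscreteFibration.hom_ext {A : Type u₁} {E : Type u₂} {B : Type u₃}
    [Category.{v₁} A] [Category.{v₂} E] [Category.{v₃} B]
    {d : E ⥤ A} {c : E ⥤ B} (h : IsTwoSidedDiscreteFibration d c)
    {x y : E} {m m' : x ⟶ y} (hdm : d.map m = d.map m') (hcm : c.map m = c.map m') :
    m = m' := by
  obtain ⟨e₃, u, v, rfl, hu, hv⟩ := h.factor m
  obtain ⟨e₃', u', v', rfl, hu', hv'⟩ := h.factor m'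
  obtain ⟨hu1, hu2⟩ := hu
  obtain ⟨hv1, hv2⟩ := hv
  obtain ⟨hu1', hu2'⟩ := hu'
  obtain ⟨hv1', hv2'⟩ := hv'
  have hru : (⟨e₃, u⟩ : Σ e', x ⟶ e') = ⟨e₃', u'⟩ :=
    (h.lift_right x (c.obj y) (c.map (u ≫ v))).unique
      ⟨⟨hv1, by rw [Functor.map_comp, hv2]⟩, ⟨hu1, hu2⟩⟩
      ⟨⟨hv1', by rw [hcm, Functor.map_comp, hv2']⟩, ⟨hu1', hu2'⟩⟩
  obtain rfl : e₃ = e₃' := congrArg Sigma.fst hru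
  obtain rfl : u = u' := by simpa using hru
  have hrv : (⟨e₃, v⟩ : Σ e', e' ⟶ y) = ⟨e₃, v'⟩ :=
    (h.lift_left y (d.obj x) (d.map (u ≫ v))).unique
      ⟨⟨hu1, by rw [Functor.map_comp, hu2]⟩, ⟨hv1, hv2⟩⟩
      ⟨⟨hu1', by rw [hdm, Functor.map_comp, hu2']⟩, ⟨hv1', hv2'⟩⟩
  obtain rfl : v = v' := by simpa using hrv
  rfl

end Stmt6Aux

namespace StrictPullback
variable {X : Type u₁} {A : Type u₂} {B : Type u₃}
variable [Category.{v₁} X] [Category.{v₂} A] [Category.{v₃} B]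
variable {g : X ⥤ B} {f : A ⥤ B}

@[simp] lemma id_left' (P : StrictPullback g f) : Hom.left (𝟙 P) = 𝟙 P.fst := rfl
@[simp] lemma id_right' (P : StrictPullback g f) : Hom.right (𝟙 P) = 𝟙 P.snd := rfl
@[simp] lemma comp_left' {P Q R : StrictPullback g f} (u : P ⟶ Q) (v : Q ⟶ R) :
    Hom.left (u ≫ v) = u.left ≫ v.left := rfl
@[simp] lemma comp_right' {P Q R : StrictPullback g f} (u : P ⟶ Q) (v : Q ⟶ R) :
    Hom.right (u ≫ v) = u.right ≫ v.right := rfl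

end StrictPullback

namespace Stmt6

variable {A : Type u₁} {B : Type u₂} {X : Type u₃} {E₁ : Type u₄} {E₂ : Type u₅}
variable [Category.{v₁} A] [Category.{v₂} B] [Category.{v₃} X]
variable [Category.{v₄} E₁] [Category.{v₅} E₂]
variable {f : A ⥤ B} {d₁ : E₁ ⥤ X} {c₁ : E₁ ⥤ A} {d₂ : E₂ ⥤ X} {c₂ : E₂ ⥤ B} {ψ : E₁ ⥤ E₂}

lemma cObj (hc : ψ ⋙ c₂ = c₁ ⋙ f) (P : SpanComp f c₁) :
    c₂.obj (ψ.obj P.fst) = f.obj P.snd.left := by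
  have := Functor.congr_obj hc P.fst
  simp only [Functor.comp_obj] at this
  rw [this, P.eq]; rfl

/-- The comparison morphism to the comma object. -/
def ρ (hc : ψ ⋙ c₂ = c₁ ⋙ f) (P : SpanComp f c₁) :
    c₂.obj (ψ.obj P.fst) ⟶ P.snd.right :=
  eqToHom (cObj hc P) ≫ P.snd.hom

/-- The chosen right lift of `ρ`. -/
noncomputable def σd (h₂ : IsTwoSidedDiscreteFibration d₂ c₂) (hc : ψ ⋙ c₂ = c₁ ⋙ f)
    (P : SpanComp f c₁) : Σ e' : E₂, ψ.obj P.fst ⟶ e' :=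
  (h₂.lift_right (ψ.obj P.fst) P.snd.right (ρ hc P)).choose

lemma σc (h₂ : IsTwoSidedDiscreteFibration d₂ c₂) (hc : ψ ⋙ c₂ = c₁ ⋙ f)
    (P : SpanComp f c₁) :
    ∃ h : c₂.obj (σd h₂ hc P).1 = P.snd.right,
      ρ hc P = c₂.map (σd h₂ hc P).2 ≫ eqToHom h :=
  (h₂.lift_right (ψ.obj P.fst) P.snd.right (ρ hc P)).choose_spec.1.1

lemma σid (h₂ : IsTwoSidedDiscreteFibration d₂ c₂) (hc : ψ ⋙ c₂ = c₁ ⋙ f)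
    (P : SpanComp f c₁) : IsIdentityHom (d₂.map (σd h₂ hc P).2) :=
  (h₂.lift_right (ψ.obj P.fst) P.snd.right (ρ hc P)).choose_spec.1.2

lemma σuniq (h₂ : IsTwoSidedDiscreteFibration d₂ c₂) (hc : ψ ⋙ c₂ = c₁ ⋙ f)
    (P : SpanComp f c₁) (p : Σ e' : E₂, ψ.obj P.fst ⟶ e')
    (hp : (∃ h : c₂.obj p.1 = P.snd.right, ρ hc P = c₂.map p.2 ≫ eqToHom h) ∧
      IsIdentityHom (d₂.map p.2)) : p = σd h₂ hc P :=
  (h₂.lift_right (ψ.obj P.fst) P.snd.right (ρ hc P)).choose_spec.2 p hp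

lemma oc (h₂ : IsTwoSidedDiscreteFibration d₂ c₂) (hc : ψ ⋙ c₂ = c₁ ⋙ f)
    (P : SpanComp f c₁) : c₂.obj (σd h₂ hc P).1 = P.snd.right :=
  (σc h₂ hc P).choose

lemma σc' (h₂ : IsTwoSidedDiscreteFibration d₂ c₂) (hc : ψ ⋙ c₂ = c₁ ⋙ f)
    (P : SpanComp f c₁) :
    ρ hc P = c₂.map (σd h₂ hc P).2 ≫ eqToHom (oc h₂ hc P) :=
  (σc h₂ hc P).choose_spec

lemma od (h₂ : IsTwoSidedDiscreteFibration d₂ c₂) (hd : ψ ⋙ d₂ = d₁)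
    (hc : ψ ⋙ c₂ = c₁ ⋙ f) (P : SpanComp f c₁) :
    d₂.obj (σd h₂ hc P).1 = d₁.obj P.fst :=
  (σid h₂ hc P).obj_eq.symm.trans (Functor.congr_obj hd P.fst)

section Maps
variable (h₂ : IsTwoSidedDiscreteFibration d₂ c₂) (hd : ψ ⋙ d₂ = d₁) (hc : ψ ⋙ c₂ = c₁ ⋙ f)
variable {P Q R : SpanComp f c₁}

/-- The chosen right lift used to build the action on morphisms. -/
noncomputable def rli (u : P ⟶ Q) : Σ e' : E₂, (σd h₂ hc P).1 ⟶ e' :=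
  (h₂.lift_right (σd h₂ hc P).1 Q.snd.right (eqToHom (oc h₂ hc P) ≫ u.right.right)).choose

lemma rli_c (u : P ⟶ Q) :
    ∃ h : c₂.obj (rli h₂ hc u).1 = Q.snd.right,
      eqToHom (oc h₂ hc P) ≫ u.right.right = c₂.map (rli h₂ hc u).2 ≫ eqToHom h :=
  (h₂.lift_right (σd h₂ hc P).1 Q.snd.right
    (eqToHom (oc h₂ hc P) ≫ u.right.right)).choose_spec.1.1

lemma rli_d (u : P ⟶ Q) : IsIdentityHom (d₂.map (rli h₂ hc u).2) :=
  (h₂.lift_right (σd h₂ hc P).1 Q.snd.right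
    (eqToHom (oc h₂ hc P) ≫ u.right.right)).choose_spec.1.2

/-- The chosen left lift used to build the action on morphisms. -/
noncomputable def lli (u : P ⟶ Q) : Σ e' : E₂, e' ⟶ (σd h₂ hc Q).1 :=
  (h₂.lift_left (σd h₂ hc Q).1 (d₂.obj (σd h₂ hc P).1)
    (eqToHom (od h₂ hd hc P) ≫ d₁.map u.left ≫ eqToHom (od h₂ hd hc Q).symm)).choose

lemma lli_d (u : P ⟶ Q) :
    ∃ h : d₂.obj (σd h₂ hc P).1 = d₂.obj (lli h₂ hd hc u).1,
      eqToHom (od h₂ hd hc P) ≫ d₁.map u.left ≫ eqToHom (od h₂ hd hc Q).symm =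
        eqToHom h ≫ d₂.map (lli h₂ hd hc u).2 :=
  (h₂.lift_left (σd h₂ hc Q).1 (d₂.obj (σd h₂ hc P).1)
    (eqToHom (od h₂ hd hc P) ≫ d₁.map u.left ≫ eqToHom (od h₂ hd hc Q).symm)).choose_spec.1.1

lemma lli_c (u : P ⟶ Q) : IsIdentityHom (c₂.map (lli h₂ hd hc u).2) :=
  (h₂.lift_left (σd h₂ hc Q).1 (d₂.obj (σd h₂ hc P).1)
    (eqToHom (od h₂ hd hc P) ≫ d₁.map u.left ≫ eqToHom (od h₂ hd hc Q).symm)).choose_spec.1.2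

lemma key (u : P ⟶ Q) :
    ρ hc P ≫ u.right.right = c₂.map (ψ.map u.left) ≫ ρ hc Q := by
  have hψ := Functor.congr_hom hc u.left
  simp only [Functor.comp_obj, Functor.comp_map] at hψ
  have huw := u.w
  simp only [Comma.fst_map] at huw
  have hf := congrArg (fun z => f.map z) huw
  simp only [Functor.map_comp, eqToHom_map] at hf
  have hcw := u.right.w
  simp only [Functor.id_map] at hcw
  have hf' : f.map u.right.left =
      eqToHom (congrArg f.obj P.eq).symm ≫ (f.map (c₁.map u.left) ≫
        eqToHom (congrArg f.obj Q.eq)) := by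
    rw [hf]; simp
  simp only [ρ, Category.assoc]
  rw [← hcw, hψ, hf']
  simp

lemma e45 (u : P ⟶ Q) : (rli h₂ hc u).1 = (lli h₂ hd hc u).1 := by
  obtain ⟨e₃, u', v', hk, hID, cID⟩ := h₂.factor (ψ.map u.left ≫ (σd h₂ hc Q).2)
  obtain ⟨hu1, hu2⟩ := hID
  obtain ⟨hv1, hv2⟩ := cID
  obtain ⟨hrc1, hrc2⟩ := rli_c h₂ hc u
  have h4 : (⟨(rli h₂ hc u).1, (σd h₂ hc P).2 ≫ (rli h₂ hc u).2⟩ :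
      Σ e' : E₂, ψ.obj P.fst ⟶ e') = ⟨e₃, u'⟩ := by
    refine (h₂.lift_right (ψ.obj P.fst) Q.snd.right (ρ hc P ≫ u.right.right)).unique
      ⟨⟨hrc1, ?_⟩, ?_⟩ ⟨⟨hv1.trans (oc h₂ hc Q), ?_⟩, ⟨hu1, hu2⟩⟩
    · show ρ hc P ≫ u.right.right =
        c₂.map ((σd h₂ hc P).2 ≫ (rli h₂ hc u).2) ≫ eqToHom hrc1
      rw [σc' h₂ hc P, Functor.map_comp, Category.assoc, Category.assoc, ← hrc2]
    · show IsIdentityHom (d₂.map ((σd h₂ hc P).2 ≫ (rli h₂ hc u).2))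
      rw [Functor.map_comp]
      exact (σid h₂ hc P).comp (rli_d h₂ hc u)
    · show ρ hc P ≫ u.right.right = c₂.map u' ≫ eqToHom (hv1.trans (oc h₂ hc Q))
      rw [key hc u, σc' h₂ hc Q, ← Category.assoc, ← Functor.map_comp, hk,
        Functor.map_comp, hv2]
      simp
  have hdψ := Functor.congr_hom hd u.left
  simp only [Functor.comp_obj, Functor.comp_map] at hdψ
  obtain ⟨hq1, hq2⟩ := σid h₂ hc Q
  have hvd : d₂.map v' = eqToHom hu1.symm ≫ d₂.map (ψ.map u.left) ≫ eqToHom hq1 := by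
    have hmk := congrArg (fun z => d₂.map z) hk
    simp only [Functor.map_comp] at hmk
    rw [hu2, hq2] at hmk
    rw [hmk]
    simp
  have h5 : lli h₂ hd hc u = (⟨e₃, v'⟩ : Σ e' : E₂, e' ⟶ (σd h₂ hc Q).1) := by
    refine (h₂.lift_left (σd h₂ hc Q).1 (d₂.obj (σd h₂ hc P).1)
      (eqToHom (od h₂ hd hc P) ≫ d₁.map u.left ≫ eqToHom (od h₂ hd hc Q).symm)).unique
      ⟨lli_d h₂ hd hc u, lli_c h₂ hd hc u⟩ ⟨⟨(σid h₂ hc P).obj_eq.symm.trans hu1, ?_⟩, ⟨hv1, hv2⟩⟩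
    show eqToHom (od h₂ hd hc P) ≫ d₁.map u.left ≫ eqToHom (od h₂ hd hc Q).symm =
      eqToHom ((σid h₂ hc P).obj_eq.symm.trans hu1) ≫ d₂.map v'
    rw [hvd, hdψ]
    simp
  rw [congrArg Sigma.fst h4, congrArg Sigma.fst h5]

/-- The action of the extension on morphisms. -/
noncomputable def Emap (u : P ⟶ Q) : (σd h₂ hc P).1 ⟶ (σd h₂ hc Q).1 :=
  (rli h₂ hc u).2 ≫ eqToHom (e45 h₂ hd hc u) ≫ (lli h₂ hd hc u).2

lemma Emap_d (u : P ⟶ Q) :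
    d₂.map (Emap h₂ hd hc u) =
      eqToHom (od h₂ hd hc P) ≫ d₁.map u.left ≫ eqToHom (od h₂ hd hc Q).symm := by
  obtain ⟨h1, h2⟩ := lli_d h₂ hd hc u
  obtain ⟨h3, h4⟩ := rli_d h₂ hc u
  have h5 : d₂.map (lli h₂ hd hc u).2 =
      eqToHom h1.symm ≫ eqToHom (od h₂ hd hc P) ≫ d₁.map u.left ≫
        eqToHom (od h₂ hd hc Q).symm := by rw [h2]; simp
  simp [Emap, h4, h5, eqToHom_map]

lemma Emap_c (u : P ⟶ Q) :
    c₂.map (Emap h₂ hd hc u) =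
      eqToHom (oc h₂ hc P) ≫ u.right.right ≫ eqToHom (oc h₂ hc Q).symm := by
  obtain ⟨h1, h2⟩ := rli_c h₂ hc u
  obtain ⟨h3, h4⟩ := lli_c h₂ hd hc u
  have h5 : c₂.map (rli h₂ hc u).2 =
      (eqToHom (oc h₂ hc P) ≫ u.right.right) ≫ eqToHom h1.symm := by rw [h2]; simp
  simp [Emap, h4, h5, eqToHom_map]

end Maps

/-- The extension functor. -/
noncomputable def Ext (h₂ : IsTwoSidedDiscreteFibration d₂ c₂) (hd : ψ ⋙ d₂ = d₁)
    (hc : ψ ⋙ c₂ = c₁ ⋙ f) : SpanComp f c₁ ⥤ E₂ where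
  obj P := (σd h₂ hc P).1
  map u := Emap h₂ hd hc u
  map_id P := h₂.hom_ext
    (by rw [Emap_d]; simp)
    (by rw [Emap_c]; simp)
  map_comp u v := h₂.hom_ext
    (by rw [Emap_d, Functor.map_comp, Emap_d, Emap_d]; simp)
    (by rw [Emap_c, Functor.map_comp, Emap_c, Emap_c]; simp)

section Final
variable (h₂ : IsTwoSidedDiscreteFibration d₂ c₂) (hd : ψ ⋙ d₂ = d₁) (hc : ψ ⋙ c₂ = c₁ ⋙ f)

lemma Ext_d : Ext h₂ hd hc ⋙ d₂ = spanCompLeft f d₁ c₁ :=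
  CategoryTheory.Functor.ext (fun P => od h₂ hd hc P) (fun P Q u => by
    simpa [Ext, spanCompLeft, strictPullbackFst] using Emap_d h₂ hd hc u)

lemma Ext_c : Ext h₂ hd hc ⋙ c₂ = spanCompRight f c₁ :=
  CategoryTheory.Functor.ext (fun P => oc h₂ hc P) (fun P Q u => by
    simpa [Ext, spanCompRight, strictPullbackSnd] using Emap_c h₂ hd hc u)

lemma jobj (e : E₁) :
    (⟨ψ.obj e, 𝟙 (ψ.obj e)⟩ : Σ e' : E₂, ψ.obj ((jSpan f c₁).obj e).fst ⟶ e') =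
      σd h₂ hc ((jSpan f c₁).obj e) := by
  refine σuniq h₂ hc _ _ ⟨⟨?_, ?_⟩, ?_⟩
  · exact cObj hc ((jSpan f c₁).obj e)
  · simp [ρ, jSpan]
  · show IsIdentityHom (d₂.map (𝟙 (ψ.obj e)))
    exact ⟨rfl, by rw [CategoryTheory.Functor.map_id]; rfl⟩

omit h₂ hd hc in
lemma eqToHom_aux4 {C : Type u₁} [Category.{v₁} C] {x y p q r w : C} (h : p ⟶ q) (a : x = p)
    (b : q = w) (c : x = y) (d : y = p) (e : q = r) (g : r = w) :
    eqToHom a ≫ h ≫ eqToHom b = eqToHom c ≫ eqToHom d ≫ h ≫ eqToHom e ≫ eqToHom g := by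
  subst c d e g; simp

omit h₂ hd hc in
lemma eqToHom_aux4' {C : Type u₁} [Category.{v₁} C] {x y p q r w : C} (h : p ⟶ q) (a : x = p)
    (b : q = w) (c : x = y) (d : y = p) (e : q = r) (g : r = w) :
    eqToHom a ≫ h ≫ eqToHom b = eqToHom c ≫ (eqToHom d ≫ h ≫ eqToHom e) ≫ eqToHom g := by
  subst c d e g; simp

lemma Ext_obj (P : SpanComp f c₁) : (Ext h₂ hd hc).obj P = (σd h₂ hc P).1 := rfl

lemma Ext_map_d {P Q : SpanComp f c₁} (u : P ⟶ Q) : d₂.map ((Ext h₂ hd hc).map u) =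
    eqToHom (od h₂ hd hc P) ≫ d₁.map u.left ≫ eqToHom (od h₂ hd hc Q).symm := Emap_d h₂ hd hc u

lemma Ext_map_c {P Q : SpanComp f c₁} (u : P ⟶ Q) : c₂.map ((Ext h₂ hd hc).map u) =
    eqToHom (oc h₂ hc P) ≫ u.right.right ≫ eqToHom (oc h₂ hc Q).symm := Emap_c h₂ hd hc u

lemma Ext_j : jSpan f c₁ ⋙ Ext h₂ hd hc = ψ := by
  refine CategoryTheory.Functor.ext (fun e => @id ((jSpan f c₁ ⋙ Ext h₂ hd hc).obj e = ψ.obj e)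
    (congrArg Sigma.fst (jobj h₂ hc e)).symm) ?_
  intro e e' ε
  refine h₂.hom_ext ?_ ?_
  · have hdψ := Functor.congr_hom hd ε
    simp only [Functor.comp_obj, Functor.comp_map] at hdψ
    show d₂.map (Emap h₂ hd hc ((jSpan f c₁).map ε)) = _
    rw [Emap_d h₂ hd hc, Functor.map_comp, Functor.map_comp, eqToHom_map, eqToHom_map, hdψ]
    simp [jSpan]
    exact eqToHom_aux4 _ _ _ _ _ _ _
  · have hcψ := Functor.congr_hom hc ε
    simp only [Functor.comp_obj, Functor.comp_map] at hcψ
    show c₂.map (Emap h₂ hd hc ((jSpan f c₁).map ε)) = _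
    rw [Emap_c h₂ hd hc, Functor.map_comp, Functor.map_comp, eqToHom_map, eqToHom_map, hcψ]
    simp [jSpan]
    exact eqToHom_aux4 _ _ _ _ _ _ _

/-- The canonical morphism from the image of `jSpan` to any object of the composite span. -/
def θ (P : SpanComp f c₁) : (jSpan f c₁).obj P.fst ⟶ P where
  left := 𝟙 P.fst
  right :=
    { left := eqToHom P.eq
      right := eqToHom (congrArg f.obj P.eq) ≫ P.snd.hom
      w := by simp [jSpan, eqToHom_map] }
  w := by simp [jSpan]; exact (eqToHom_trans _ _).symm

lemma eqToHom_aux3 {C : Type u₁} [Category.{v₁} C] {x y z w : C} (a : x = y) (b : y = z)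
    (c : z = w) (d : x = w) : eqToHom a ≫ eqToHom b ≫ eqToHom c = eqToHom d := by
  subst a b c; simp

lemma eqToHom_aux5 {C : Type u₁} [Category.{v₁} C] {x y z p q r : C} (h : p ⟶ q) (a : x = p)
    (b : x = y) (c : y = z) (d : z = p) (e : q = r) (g : r = q) :
    eqToHom a ≫ h = eqToHom b ≫ eqToHom c ≫ eqToHom d ≫ h ≫ eqToHom e ≫ eqToHom g := by
  subst b c d e; simp

include hd in
lemma uniq_obj (φ' : SpanComp f c₁ ⥤ E₂) (h1 : φ' ⋙ d₂ = spanCompLeft f d₁ c₁)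
    (hc2 : φ' ⋙ c₂ = spanCompRight f c₁) (h3 : jSpan f c₁ ⋙ φ' = ψ) (P : SpanComp f c₁) :
    (⟨φ'.obj P, eqToHom (Functor.congr_obj h3 P.fst).symm ≫ φ'.map (θ P)⟩ :
      Σ e' : E₂, ψ.obj P.fst ⟶ e') = σd h₂ hc P := by
  refine σuniq h₂ hc P _ ⟨⟨Functor.congr_obj hc2 P, ?_⟩, ?_⟩
  · show ρ hc P = c₂.map (eqToHom (Functor.congr_obj h3 P.fst).symm ≫ φ'.map (θ P)) ≫
      eqToHom (Functor.congr_obj hc2 P)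
    have hφc := Functor.congr_hom hc2 (θ P)
    simp only [Functor.comp_obj, Functor.comp_map] at hφc
    rw [Functor.map_comp, hφc, eqToHom_map]
    simp [ρ, θ, jSpan, spanCompRight, strictPullbackSnd]
    exact eqToHom_aux5 _ _ _ _ _ _ _
  · show IsIdentityHom (d₂.map (eqToHom (Functor.congr_obj h3 P.fst).symm ≫ φ'.map (θ P)))
    refine ⟨(Functor.congr_obj hd P.fst).trans (Functor.congr_obj h1 P).symm, ?_⟩
    have hφd := Functor.congr_hom h1 (θ P)
    simp only [Functor.comp_obj, Functor.comp_map] at hφd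
    rw [Functor.map_comp, hφd, eqToHom_map]
    simp [θ, jSpan, spanCompLeft, strictPullbackFst]
    exact eqToHom_aux3 _ _ _ _

lemma uniq (φ' : SpanComp f c₁ ⥤ E₂) (h1 : φ' ⋙ d₂ = spanCompLeft f d₁ c₁)
    (hc2 : φ' ⋙ c₂ = spanCompRight f c₁) (h3 : jSpan f c₁ ⋙ φ' = ψ) :
    φ' = Ext h₂ hd hc := by
  refine CategoryTheory.Functor.ext
    (fun P => (congrArg Sigma.fst (uniq_obj h₂ hd hc φ' h1 hc2 h3 P)).trans
      (Ext_obj h₂ hd hc P).symm) ?_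
  intro P Q u
  refine h₂.hom_ext ?_ ?_
  · have hφd := Functor.congr_hom h1 u
    simp only [Functor.comp_obj, Functor.comp_map] at hφd
    rw [hφd, Functor.map_comp, Functor.map_comp, eqToHom_map, eqToHom_map,
      Ext_map_d h₂ hd hc u]
    simp [spanCompLeft, strictPullbackFst]
    exact eqToHom_aux4' _ _ _ _ _ _ _
  · have hφc := Functor.congr_hom hc2 u
    simp only [Functor.comp_obj, Functor.comp_map] at hφc
    rw [hφc, Functor.map_comp, Functor.map_comp, eqToHom_map, eqToHom_map,
      Ext_map_c h₂ hd hc u]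
    simp [spanCompRight, strictPullbackSnd]
    exact eqToHom_aux4' _ _ _ _ _ _ _

end Final

end Stmt6

/-- yoneda lemma for two-sided discrete fibrations in `CAT`.
Let `(d₁, E₁, c₁)` be a span from `X` to `A` and `(d₂, E₂, c₂)` a two-sided discrete
fibration from `X` to `B`.  Composition with the canonical span morphism
`j : f ∘ E₁ ⟶ (f/B) ∘ E₁` sends span morphisms `(f/B) ∘ E₁ ⟶ E₂` to span morphisms
`f ∘ E₁ ⟶ E₂`, and this assignment is a bijection (each span morphism `f ∘ E₁ ⟶ E₂`
extends to a unique span morphism `(f/B) ∘ E₁ ⟶ E₂`). -/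
theorem stmt6 (d₂ : E₂ ⥤ X) (c₂ : E₂ ⥤ B)
    (h₂ : IsTwoSidedDiscreteFibration d₂ c₂) :
    (∀ φ : SpanComp f c₁ ⥤ E₂,
        (φ ⋙ d₂ = spanCompLeft f d₁ c₁ ∧ φ ⋙ c₂ = spanCompRight f c₁) →
        ((jSpan f c₁ ⋙ φ) ⋙ d₂ = d₁ ∧ (jSpan f c₁ ⋙ φ) ⋙ c₂ = c₁ ⋙ f)) ∧
    (∀ ψ : E₁ ⥤ E₂, (ψ ⋙ d₂ = d₁ ∧ ψ ⋙ c₂ = c₁ ⋙ f) →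
        ∃! φ : SpanComp f c₁ ⥤ E₂,
          (φ ⋙ d₂ = spanCompLeft f d₁ c₁ ∧ φ ⋙ c₂ = spanCompRight f c₁) ∧
          jSpan f c₁ ⋙ φ = ψ) := by
  constructor
  · rintro φ ⟨h1, h2⟩
    constructor
    · rw [Functor.assoc, h1]; rfl
    · rw [Functor.assoc, h2]; rfl
  · rintro ψ ⟨hd, hc⟩
    exact ⟨Stmt6.Ext h₂ hd hc,
      ⟨⟨Stmt6.Ext_d h₂ hd hc, Stmt6.Ext_c h₂ hd hc⟩, Stmt6.Ext_j h₂ hd hc⟩,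
      fun φ' h => Stmt6.uniq h₂ hd hc φ' h.1.1 h.1.2 h.2⟩

end Statement6
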